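/- For every w ∈ ℂ with Im w > 0 and every t ∈ ℝ, one has sin²(t/2) ≠ sin²(w/2), the family (exp(i·w·|n| − i·n·t))_{n ∈ ℤ} is summable in ℂ, and ∑_{n ∈ ℤ} exp(i·w·|n| − i·n·t) = −(i/2) · sin(w) / (sin²(t/2) − sin²(w/2)). -/

import Mathlib

set_option maxHeartbeats 1000000


/-- For `w ∈ ℂ` with `Im w > 0` and `t ∈ ℝ`, one has
`sin²(t/2) ≠ sin²(w/2)`, the family `(exp(i·w·|n| − i·n·t))_{n ∈ ℤ}` is summable, and
`∑_{n ∈ ℤ} exp(i·w·|n| − i·n·t) = −(i/2)·sin w / (sin²(t/2) − sin²(w/2))`. -/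
theorem stmt_3 (w : ℂ) (hw : 0 < w.im) (t : ℝ) :
    Complex.sin ((t : ℂ) / 2) ^ 2 ≠ Complex.sin (w / 2) ^ 2 ∧
    Summable (fun n : ℤ =>
      Complex.exp (Complex.I * w * ((|n| : ℤ) : ℂ) - Complex.I * (n : ℂ) * (t : ℂ))) ∧
    ∑' n : ℤ, Complex.exp (Complex.I * w * ((|n| : ℤ) : ℂ) - Complex.I * (n : ℂ) * (t : ℂ)) =
      -(Complex.I / 2) * Complex.sin w /
        (Complex.sin ((t : ℂ) / 2) ^ 2 - Complex.sin (w / 2) ^ 2) := by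
  set u : ℂ := Complex.exp (((t : ℂ) / 2) * Complex.I) with hu_def
  set v : ℂ := Complex.exp ((w / 2) * Complex.I) with hv_def
  have hu : u ≠ 0 := Complex.exp_ne_zero _
  have hv : v ≠ 0 := Complex.exp_ne_zero _
  have hb : Complex.exp (Complex.I * (t : ℂ)) = u * u := by
    rw [hu_def, ← Complex.exp_add]; congr 1; ring
  have hq : Complex.exp (Complex.I * w) = v * v := by
    rw [hv_def, ← Complex.exp_add]; congr 1; ring
  have hqw : Complex.exp (w * Complex.I) = v * v := by
    rw [hv_def, ← Complex.exp_add]; congr 1; ring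
  have ha : Complex.exp (-Complex.I * (t : ℂ)) = (u * u)⁻¹ := by
    rw [neg_mul, Complex.exp_neg, hb]
  -- norms
  have hnv : ‖v * v‖ < 1 := by
    rw [← hq, Complex.norm_exp]
    have : (Complex.I * w).re = -w.im := by simp
    rw [this]
    exact Real.exp_lt_one_iff.mpr (by linarith)
  have hnu : ‖u * u‖ = 1 := by
    rw [← hb, Complex.norm_exp]
    have : (Complex.I * (t : ℂ)).re = 0 := by simp
    rw [this, Real.exp_zero]
  have h1 : ‖v * v * (u * u)⁻¹‖ < 1 := by
    rw [norm_mul, norm_inv, hnu, inv_one, mul_one]; exact hnv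
  have h2 : ‖v * v * (u * u)‖ < 1 := by
    rw [norm_mul, hnu, mul_one]; exact hnv
  have hne : ∀ x : ℂ, ‖x‖ < 1 → 1 - x ≠ 0 := by
    intro x hx h
    rw [sub_eq_zero] at h
    rw [← h] at hx
    simp at hx
  have hg1 : 1 - v * v * (u * u)⁻¹ ≠ 0 := hne _ h1
  have hg2 : 1 - v * v * (u * u) ≠ 0 := hne _ h2
  -- sin expressions
  have hsint : Complex.sin ((t : ℂ) / 2) = (u⁻¹ - u) * Complex.I / 2 := by
    rw [Complex.sin, neg_mul, Complex.exp_neg, ← hu_def]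
  have hsinw : Complex.sin (w / 2) = (v⁻¹ - v) * Complex.I / 2 := by
    rw [Complex.sin, neg_mul, Complex.exp_neg, ← hv_def]
  have hsins : Complex.sin w = ((v * v)⁻¹ - v * v) * Complex.I / 2 := by
    rw [Complex.sin, neg_mul, Complex.exp_neg, hqw]
  have hsq2 : ∀ z : ℂ, (z * Complex.I / 2) ^ 2 = -(z ^ 2) / 4 := fun z => by
    rw [div_pow, mul_pow, Complex.I_sq]; ring
  -- key denominator identity
  have hDkey : (Complex.sin ((t : ℂ) / 2) ^ 2 - Complex.sin (w / 2) ^ 2) * (4 * (v * v)) =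
      (1 - v * v * (u * u)⁻¹) * (1 - v * v * (u * u)) := by
    rw [hsint, hsinw, hsq2, hsq2]
    field_simp
    ring
  have h4 : (4 : ℂ) * (v * v) ≠ 0 := mul_ne_zero (by norm_num) (mul_ne_zero hv hv)
  have hD : Complex.sin ((t : ℂ) / 2) ^ 2 - Complex.sin (w / 2) ^ 2 ≠ 0 := by
    intro h
    rw [h, zero_mul] at hDkey
    exact (mul_ne_zero hg1 hg2) hDkey.symm
  -- term identities
  have hpos : ∀ n : ℕ, Complex.exp (Complex.I * w * ((|(n : ℤ)| : ℤ) : ℂ)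
      - Complex.I * ((n : ℤ) : ℂ) * (t : ℂ)) = (v * v * (u * u)⁻¹) ^ n := by
    intro n
    have e1 : Complex.I * w * ((|(n : ℤ)| : ℤ) : ℂ) - Complex.I * ((n : ℤ) : ℂ) * (t : ℂ)
        = (n : ℕ) * (Complex.I * w) + (n : ℕ) * (-Complex.I * (t : ℂ)) := by
      rw [Int.abs_natCast]; push_cast; ring
    rw [e1, Complex.exp_add, Complex.exp_nat_mul, Complex.exp_nat_mul, hq, ha, ← mul_pow]
  have hneg : ∀ n : ℕ, Complex.exp (Complex.I * w * ((|(-((n : ℤ) + 1) : ℤ)| : ℤ) : ℂ)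
      - Complex.I * ((-((n : ℤ) + 1) : ℤ) : ℂ) * (t : ℂ)) = (v * v * (u * u)) ^ (n + 1) := by
    intro n
    have habs : |(-((n : ℤ) + 1) : ℤ)| = (n : ℤ) + 1 := by
      rw [abs_neg, _root_.abs_of_nonneg]; positivity
    have e2 : Complex.I * w * ((|(-((n : ℤ) + 1) : ℤ)| : ℤ) : ℂ)
        - Complex.I * ((-((n : ℤ) + 1) : ℤ) : ℂ) * (t : ℂ)
        = ((n + 1 : ℕ)) * (Complex.I * w) + ((n + 1 : ℕ)) * (Complex.I * (t : ℂ)) := by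
      rw [habs]; push_cast; ring
    rw [e2, Complex.exp_add, Complex.exp_nat_mul, Complex.exp_nat_mul, hq, hb, ← mul_pow]
  -- geometric sums
  have hs1 : HasSum (fun n : ℕ => Complex.exp (Complex.I * w * ((|(n : ℤ)| : ℤ) : ℂ)
      - Complex.I * ((n : ℤ) : ℂ) * (t : ℂ))) (1 - v * v * (u * u)⁻¹)⁻¹ := by
    simp only [hpos]
    exact hasSum_geometric_of_norm_lt_one h1
  have hs2 : HasSum (fun n : ℕ => Complex.exp (Complex.I * w * ((|(-((n : ℤ) + 1) : ℤ)| : ℤ) : ℂ)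
      - Complex.I * ((-((n : ℤ) + 1) : ℤ) : ℂ) * (t : ℂ)))
      ((v * v * (u * u)) * (1 - v * v * (u * u))⁻¹) := by
    simp only [hneg]
    have := (hasSum_geometric_of_norm_lt_one h2).mul_left (v * v * (u * u))
    simpa [pow_succ, mul_comm] using this
  have hsum : HasSum (fun n : ℤ => Complex.exp (Complex.I * w * ((|n| : ℤ) : ℂ)
      - Complex.I * (n : ℂ) * (t : ℂ)))
      ((1 - v * v * (u * u)⁻¹)⁻¹ + (v * v * (u * u)) * (1 - v * v * (u * u))⁻¹) :=
    hs1.of_nat_of_neg_add_one hs2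
  refine ⟨sub_ne_zero.mp hD, hsum.summable, ?_⟩
  rw [hsum.tsum_eq]
  have hnum : -(Complex.I / 2) * Complex.sin w = ((v * v)⁻¹ - v * v) / 4 := by
    rw [hsins]
    linear_combination (-(((v * v)⁻¹ - v * v)) / 4) * Complex.I_sq
  rw [hnum, eq_div_iff hD]
  apply mul_right_cancel₀ h4
  rw [mul_assoc, hDkey]
  have c1 := inv_mul_cancel₀ hg1
  have c2 := inv_mul_cancel₀ hg2
  have c3 := inv_mul_cancel₀ (mul_ne_zero hv hv)
  have c4 := inv_mul_cancel₀ (mul_ne_zero hu hu)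
  linear_combination (1 - v * v * (u * u)) * c1
    + (v * v * (u * u)) * (1 - v * v * (u * u)⁻¹) * c2 - c3 - (v * v * v * v) * c4
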